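/- Under the truncation model with exchangeable continuous joint density, the estimator F̂_n(x) = (1/(2n))[Σ_{i=1}^n 1{X_i ≤ x} + Σ_{i=1}^n 1{Y_i ≤ x}], computed from n i.i.d. pairs drawn from the biased density 2·1{x<y}f(x,y), converges almost surely (uniformly in x) to the common unbiased marginal CDF F_X = F_Y. -/

import Mathlib

open MeasureTheory ProbabilityTheory Filter

section AuxGC

variable (f : ℝ → ℝ → ℝ)

lemma aux_line_null (t : ℝ) : (volume : Measure (ℝ × ℝ)) {p | p.1 = t} = 0 := by
  have h : {p : ℝ × ℝ | p.1 = t} = ({t} : Set ℝ) ×ˢ (Set.univ : Set ℝ) := by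
    ext ⟨a, b⟩; simp [eq_comm]
  rw [h, Measure.volume_eq_prod, Measure.prod_prod]
  simp

lemma aux_diag_null : (volume : Measure (ℝ × ℝ)) {p | p.1 = p.2} = 0 := by
  have hm : MeasurableSet {p : ℝ × ℝ | p.1 = p.2} :=
    measurableSet_eq_fun measurable_fst measurable_snd
  rw [Measure.volume_eq_prod, Measure.prod_apply hm]
  have h : ∀ x : ℝ, (volume : Measure ℝ) (Prod.mk x ⁻¹' {p : ℝ × ℝ | p.1 = p.2}) = 0 := by
    intro x
    have h2 : Prod.mk x ⁻¹' {p : ℝ × ℝ | p.1 = p.2} = {x} := by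
      ext y; simp [eq_comm]
    rw [h2]; simp
  simp [h]

variable (hf_meas : Measurable (Function.uncurry f))
    (hf_nn : ∀ x y, 0 ≤ f x y)
    (hf_int : Integrable (fun p : ℝ × ℝ => f p.1 p.2))

include hf_meas in
lemma aux_meas_ite (P : ℝ × ℝ → Prop) [DecidablePred P] (hP : MeasurableSet {p | P p}) :
    Measurable (fun p : ℝ × ℝ => if P p then f p.1 p.2 else 0) :=
  Measurable.ite hP hf_meas measurable_const

include hf_meas hf_nn hf_int in
lemma aux_int_ite (P : ℝ × ℝ → Prop) [DecidablePred P] (hP : MeasurableSet {p | P p}) :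
    Integrable (fun p : ℝ × ℝ => if P p then f p.1 p.2 else 0) := by
  refine hf_int.mono (aux_meas_ite f hf_meas P hP).aestronglyMeasurable
    (ae_of_all _ fun p => ?_)
  by_cases h : P p <;>
    simp [h, Real.norm_eq_abs, abs_of_nonneg (hf_nn _ _), abs_nonneg, le_abs_self,
      hf_nn p.1 p.2]

/-- The common marginal CDF. -/
noncomputable def auxG : ℝ → ℝ := fun t => ∫ p : ℝ × ℝ, (if p.1 ≤ t then f p.1 p.2 else 0)

include hf_meas hf_nn hf_int

lemma aux_hPle (t : ℝ) : MeasurableSet {p : ℝ × ℝ | p.1 ≤ t} :=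
  measurableSet_le measurable_fst measurable_const

lemma aux_G_int (t : ℝ) :
    Integrable (fun p : ℝ × ℝ => if p.1 ≤ t then f p.1 p.2 else 0) :=
  aux_int_ite f hf_meas hf_nn hf_int _ (aux_hPle f hf_meas hf_nn hf_int t)

lemma aux_G_mono : Monotone (auxG f) := by
  intro s t hst
  refine integral_mono (aux_G_int f hf_meas hf_nn hf_int s)
    (aux_G_int f hf_meas hf_nn hf_int t) (fun p => ?_)
  by_cases h : p.1 ≤ s
  · simp [h, h.trans hst]
  · by_cases h' : p.1 ≤ t <;> simp [h, h', hf_nn p.1 p.2]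

lemma aux_G_nonneg (t : ℝ) : 0 ≤ auxG f t := by
  refine integral_nonneg fun p => ?_
  by_cases h : p.1 ≤ t <;> simp [h, hf_nn p.1 p.2]

lemma aux_G_le_one (hf_one : (∫ p : ℝ × ℝ, f p.1 p.2) = 1) (t : ℝ) : auxG f t ≤ 1 := by
  rw [← hf_one]
  refine integral_mono (aux_G_int f hf_meas hf_nn hf_int t) hf_int (fun p => ?_)
  by_cases h : p.1 ≤ t <;> simp [h, hf_nn p.1 p.2]

lemma aux_G_cont : Continuous (auxG f) := by
  rw [continuous_iff_continuousAt]
  intro t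
  have key : Tendsto (fun s => ∫ p : ℝ × ℝ, (if p.1 ≤ s then f p.1 p.2 else 0))
      (nhds t) (nhds (∫ p : ℝ × ℝ, (if p.1 ≤ t then f p.1 p.2 else 0))) := by
    refine tendsto_integral_filter_of_dominated_convergence
      (fun p => f p.1 p.2)
      (Eventually.of_forall fun s =>
        (aux_meas_ite f hf_meas _ (aux_hPle f hf_meas hf_nn hf_int s)).aestronglyMeasurable)
      (Eventually.of_forall fun s => ae_of_all _ fun p => ?_) hf_int ?_
    · by_cases h : p.1 ≤ s <;>
        simp [h, Real.norm_eq_abs, abs_of_nonneg (hf_nn p.1 p.2), hf_nn p.1 p.2]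
    · have hne : ∀ᵐ p : ℝ × ℝ, p.1 ≠ t := by
        rw [ae_iff]
        simpa using aux_line_null t
      filter_upwards [hne] with p hp
      rcases lt_or_gt_of_ne hp with h | h
      · have hev : ∀ᶠ s in nhds t, (if p.1 ≤ s then f p.1 p.2 else 0) = f p.1 p.2 := by
          filter_upwards [lt_mem_nhds h] with s hs
          simp [le_of_lt hs]
        have heq : (if p.1 ≤ t then f p.1 p.2 else 0) = f p.1 p.2 := by simp [le_of_lt h]
        rw [heq]
        exact Tendsto.congr' (hev.mono fun s hs => hs.symm) tendsto_const_nhds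
      · have hev : ∀ᶠ s in nhds t, (if p.1 ≤ s then f p.1 p.2 else 0) = 0 := by
          filter_upwards [gt_mem_nhds h] with s hs
          simp [not_le.mpr hs]
        have heq : (if p.1 ≤ t then f p.1 p.2 else 0) = 0 := by simp [not_le.mpr h]
        rw [heq]
        exact Tendsto.congr' (hev.mono fun s hs => hs.symm) tendsto_const_nhds
  exact key

lemma aux_G_atBot : Tendsto (auxG f) atBot (nhds 0) := by
  have h0 : (0 : ℝ) = ∫ _p : ℝ × ℝ, (0 : ℝ) := by simp
  rw [h0]
  refine tendsto_integral_filter_of_dominated_convergence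
    (fun p => f p.1 p.2)
    (Eventually.of_forall fun s =>
      (aux_meas_ite f hf_meas _ (aux_hPle f hf_meas hf_nn hf_int s)).aestronglyMeasurable)
    (Eventually.of_forall fun s => ae_of_all _ fun p => ?_) hf_int
    (ae_of_all _ fun p => ?_)
  · by_cases h : p.1 ≤ s <;>
      simp [h, Real.norm_eq_abs, abs_of_nonneg (hf_nn p.1 p.2), hf_nn p.1 p.2]
  · have hev : ∀ᶠ s in atBot, (if p.1 ≤ s then f p.1 p.2 else 0) = 0 := by
      filter_upwards [eventually_lt_atBot p.1] with s hs
      simp [not_le.mpr hs]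
    exact Tendsto.congr' (hev.mono fun s hs => hs.symm) tendsto_const_nhds

lemma aux_G_atTop (hf_one : (∫ p : ℝ × ℝ, f p.1 p.2) = 1) :
    Tendsto (auxG f) atTop (nhds 1) := by
  rw [← hf_one]
  refine tendsto_integral_filter_of_dominated_convergence
    (fun p => f p.1 p.2)
    (Eventually.of_forall fun s =>
      (aux_meas_ite f hf_meas _ (aux_hPle f hf_meas hf_nn hf_int s)).aestronglyMeasurable)
    (Eventually.of_forall fun s => ae_of_all _ fun p => ?_) hf_int
    (ae_of_all _ fun p => ?_)
  · by_cases h : p.1 ≤ s <;>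
      simp [h, Real.norm_eq_abs, abs_of_nonneg (hf_nn p.1 p.2), hf_nn p.1 p.2]
  · have hev : ∀ᶠ s in atTop, (if p.1 ≤ s then f p.1 p.2 else 0) = f p.1 p.2 := by
      filter_upwards [eventually_ge_atTop p.1] with s hs
      simp [hs]
    exact Tendsto.congr' (hev.mono fun s hs => hs.symm) tendsto_const_nhds

lemma aux_G_surj (hf_one : (∫ p : ℝ × ℝ, f p.1 p.2) = 1) {c : ℝ}
    (hc0 : 0 < c) (hc1 : c < 1) : ∃ x, auxG f x = c := by
  obtain ⟨a, ha⟩ := ((aux_G_atBot f hf_meas hf_nn hf_int).eventually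
    (gt_mem_nhds hc0)).exists
  obtain ⟨b, hb⟩ := ((aux_G_atTop f hf_meas hf_nn hf_int hf_one).eventually
    (lt_mem_nhds hc1)).exists
  have hab : a ≤ b := by
    by_contra h
    exact absurd ((aux_G_mono f hf_meas hf_nn hf_int) (le_of_not_ge h)) (by linarith)
  obtain ⟨x, _, hx⟩ :=
    intermediate_value_Icc hab (aux_G_cont f hf_meas hf_nn hf_int).continuousOn
      ⟨le_of_lt ha, le_of_lt hb⟩
  exact ⟨x, hx⟩

include hf_nn in
omit hf_meas hf_int in
lemma aux_w_nonneg (p : ℝ × ℝ) : 0 ≤ (if p.1 < p.2 then 2 * f p.1 p.2 else 0) := by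
  by_cases h : p.1 < p.2 <;> simp [h] <;> nlinarith [hf_nn p.1 p.2]

variable (hf_symm : ∀ x y, f x y = f y x)

include hf_symm in
/-- The key identity: the `ν`-mean of the sum of the two indicators is `2 F t`. -/
lemma aux_mean (t : ℝ) :
    (∫ p : ℝ × ℝ, (((if p.1 ≤ t then (1 : ℝ) else 0) + if p.2 ≤ t then (1 : ℝ) else 0))
        ∂((volume : Measure (ℝ × ℝ)).withDensity
          (fun p => ENNReal.ofReal (if p.1 < p.2 then 2 * f p.1 p.2 else 0))))
    = 2 * ∫ p : ℝ × ℝ, (if p.1 ≤ t then f p.1 p.2 else 0) := by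
  classical
  set w : ℝ × ℝ → ℝ := fun p => if p.1 < p.2 then 2 * f p.1 p.2 else 0 with hw
  have hw_nn : ∀ p, 0 ≤ w p := aux_w_nonneg f hf_nn
  have hw_meas : Measurable w := by
    refine Measurable.ite (measurableSet_lt measurable_fst measurable_snd) ?_ measurable_const
    exact (hf_meas.const_mul 2)
  have hden : (fun p : ℝ × ℝ => ENNReal.ofReal (w p))
      = fun p => ((Real.toNNReal (w p) : NNReal) : ENNReal) := rfl
  have h1 : (∫ p : ℝ × ℝ, (((if p.1 ≤ t then (1 : ℝ) else 0) + if p.2 ≤ t then (1 : ℝ) else 0))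
        ∂((volume : Measure (ℝ × ℝ)).withDensity (fun p => ENNReal.ofReal (w p))))
      = ∫ p : ℝ × ℝ, w p * ((if p.1 ≤ t then (1 : ℝ) else 0) + if p.2 ≤ t then (1 : ℝ) else 0) := by
    rw [hden, integral_withDensity_eq_integral_smul hw_meas.real_toNNReal]
    congr 1
    funext p
    rw [NNReal.smul_def, Real.coe_toNNReal _ (hw_nn p), smul_eq_mul]
  rw [h1]
  have h2 : (fun p : ℝ × ℝ => w p * ((if p.1 ≤ t then (1 : ℝ) else 0) + if p.2 ≤ t then (1 : ℝ) else 0))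
      = fun p => 2 * (if p.1 ≤ t ∧ p.1 < p.2 then f p.1 p.2 else 0)
          + 2 * (if p.2 ≤ t ∧ p.1 < p.2 then f p.1 p.2 else 0) := by
    funext p
    by_cases hlt : p.1 < p.2 <;> by_cases h1' : p.1 ≤ t <;> by_cases h2' : p.2 ≤ t <;>
      simp [hw, hlt, h1', h2'] <;> ring
  rw [h2]
  have hint1 : Integrable (fun p : ℝ × ℝ => if p.1 ≤ t ∧ p.1 < p.2 then f p.1 p.2 else 0) :=
    aux_int_ite f hf_meas hf_nn hf_int _
      ((measurableSet_le measurable_fst measurable_const).inter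
        (measurableSet_lt measurable_fst measurable_snd))
  have hint2 : Integrable (fun p : ℝ × ℝ => if p.2 ≤ t ∧ p.1 < p.2 then f p.1 p.2 else 0) :=
    aux_int_ite f hf_meas hf_nn hf_int _
      ((measurableSet_le measurable_snd measurable_const).inter
        (measurableSet_lt measurable_fst measurable_snd))
  rw [integral_add (hint1.const_mul 2) (hint2.const_mul 2), integral_const_mul,
    integral_const_mul]
  have hswap : (∫ p : ℝ × ℝ, (if p.2 ≤ t ∧ p.1 < p.2 then f p.1 p.2 else 0))
      = ∫ p : ℝ × ℝ, (if p.1 ≤ t ∧ p.2 < p.1 then f p.1 p.2 else 0) := by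
    have hv : (volume : Measure (ℝ × ℝ)) = (volume : Measure ℝ).prod volume :=
      Measure.volume_eq_prod ℝ ℝ
    rw [hv]
    rw [← integral_prod_swap (fun p : ℝ × ℝ => if p.2 ≤ t ∧ p.1 < p.2 then f p.1 p.2 else 0)]
    congr 1
    funext z
    by_cases h : z.1 ≤ t ∧ z.2 < z.1
    · simp [Prod.swap, h.1, h.2, hf_symm z.2 z.1]
    · rw [if_neg h, if_neg]
      simpa using h
  rw [hswap]
  have hint2' : Integrable (fun p : ℝ × ℝ => if p.1 ≤ t ∧ p.2 < p.1 then f p.1 p.2 else 0) :=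
    aux_int_ite f hf_meas hf_nn hf_int _
      ((measurableSet_le measurable_fst measurable_const).inter
        (measurableSet_lt measurable_snd measurable_fst))
  rw [← mul_add, ← integral_add hint1 hint2']
  congr 1
  refine integral_congr_ae ?_
  have hne : ∀ᵐ p : ℝ × ℝ, p.1 ≠ p.2 := by
    rw [ae_iff]; simpa using aux_diag_null
  filter_upwards [hne] with p hp
  by_cases h1' : p.1 ≤ t
  · rcases lt_or_gt_of_ne hp with h | h
    · simp [h1', h, not_lt.mpr (le_of_lt h), lt_asymm h]
    · simp [h1', h, not_lt.mpr (le_of_lt h), lt_asymm h]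
  · simp [h1']

include hf_symm in
lemma aux_slln {Ω : Type*} [MeasurableSpace Ω] (μ : Measure Ω) [IsProbabilityMeasure μ]
    (Z : ℕ → Ω → ℝ × ℝ) (hZmeas : ∀ i, Measurable (Z i))
    (hindep : iIndepFun Z μ)
    (hlaw : ∀ i, μ.map (Z i) = (volume : Measure (ℝ × ℝ)).withDensity
      (fun p => ENNReal.ofReal (if p.1 < p.2 then 2 * f p.1 p.2 else 0)))
    (t : ℝ) :
    ∀ᵐ ω ∂μ, Tendsto (fun n : ℕ =>
        (∑ i ∈ Finset.range n,
          ((if (Z i ω).1 ≤ t then (1 : ℝ) else 0) + if (Z i ω).2 ≤ t then (1 : ℝ) else 0)) / n)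
      atTop (nhds (2 * ∫ p : ℝ × ℝ, (if p.1 ≤ t then f p.1 p.2 else 0))) := by
  classical
  set φ : ℝ × ℝ → ℝ :=
    fun p => (if p.1 ≤ t then (1 : ℝ) else 0) + (if p.2 ≤ t then (1 : ℝ) else 0) with hφdef
  have hφ : Measurable φ :=
    (Measurable.ite (measurableSet_le measurable_fst measurable_const)
      measurable_const measurable_const).add
    (Measurable.ite (measurableSet_le measurable_snd measurable_const)
      measurable_const measurable_const)
  have hφ_bd : ∀ p, ‖φ p‖ ≤ 2 := by
    intro p
    rw [Real.norm_eq_abs]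
    by_cases h1 : p.1 ≤ t <;> by_cases h2 : p.2 ≤ t <;> simp [hφdef, h1, h2] <;> norm_num
  set X : ℕ → Ω → ℝ := fun i ω => φ (Z i ω) with hXdef
  have hXmeas : ∀ i, Measurable (X i) := fun i => hφ.comp (hZmeas i)
  have hint : Integrable (X 0) μ :=
    Integrable.mono' (integrable_const 2) (hXmeas 0).aestronglyMeasurable
      (ae_of_all _ fun ω => hφ_bd _)
  have hpind : Pairwise (Function.onFun (IndepFun · · μ) X) := by
    intro i j hij
    exact (hindep.indepFun hij).comp hφ hφ
  have hident : ∀ i, IdentDistrib (X i) (X 0) μ μ := by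
    intro i
    have hz : IdentDistrib (Z i) (Z 0) μ μ :=
      ⟨(hZmeas i).aemeasurable, (hZmeas 0).aemeasurable, by rw [hlaw i, hlaw 0]⟩
    exact hz.comp hφ
  have hmean : μ[X 0] = 2 * ∫ p : ℝ × ℝ, (if p.1 ≤ t then f p.1 p.2 else 0) := by
    have h : μ[X 0] = ∫ p, φ p ∂(μ.map (Z 0)) :=
      (integral_map (μ := μ) (hZmeas 0).aemeasurable hφ.aestronglyMeasurable).symm
    rw [h, hlaw 0]
    exact aux_mean f hf_meas hf_nn hf_int hf_symm t
  have h := strong_law_ae_real X hint hpind hident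
  rw [hmean] at h
  filter_upwards [h] with ω hω
  exact hω

end AuxGC

lemma aux_chain (S F : ℝ → ℝ) (hSmono : Monotone S) (hS0 : ∀ t, 0 ≤ S t) (hS1 : ∀ t, S t ≤ 1)
    (hFmono : Monotone F) (hF0 : ∀ t, 0 ≤ F t) (hF1 : ∀ t, F t ≤ 1)
    (k : ℕ) (hk : 2 ≤ k) (y : ℕ → ℝ)
    (hFy : ∀ j, 1 ≤ j → j ≤ k - 1 → F (y j) = (j : ℝ) / k)
    (c : ℝ) (hc : 0 ≤ c)
    (hclose : ∀ j, 1 ≤ j → j ≤ k - 1 → |S (y j) - F (y j)| ≤ c)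
    (t : ℝ) : |S t - F t| ≤ c + 1 / k := by
  classical
  have hkR : (0 : ℝ) < (k : ℝ) := by positivity
  have h1k1 : 1 ≤ k - 1 := by omega
  rw [abs_sub_le_iff]
  by_cases hc1 : y 1 ≤ t
  · set J := Nat.findGreatest (fun j => y j ≤ t) (k - 1) with hJdef
    have hJ1 : 1 ≤ J := Nat.le_findGreatest h1k1 hc1
    have hJk : J ≤ k - 1 := Nat.findGreatest_le _
    have hyJ : y J ≤ t := Nat.findGreatest_spec (P := fun j => y j ≤ t) h1k1 hc1
    have hFJ : F (y J) = (J : ℝ) / k := hFy J hJ1 hJk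
    have hSJ := abs_le.1 (hclose J hJ1 hJk)
    have hFle : F (y J) ≤ F t := hFmono hyJ
    have hSle : S (y J) ≤ S t := hSmono hyJ
    by_cases hJtop : J = k - 1
    · have hcast : ((J : ℝ)) = (k : ℝ) - 1 := by
        rw [hJtop]
        push_cast [Nat.cast_sub (by omega : 1 ≤ k)]
        ring
      have hid : ((k : ℝ) - 1) / k = 1 - 1 / k := by field_simp
      rw [hcast, hid] at hFJ
      constructor <;> nlinarith [hS1 t, hF1 t, hF0 t, hS0 t]
    · have hJ1k : J + 1 ≤ k - 1 := by omega
      have hnot : ¬ (y (J + 1) ≤ t) :=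
        Nat.findGreatest_is_greatest (P := fun j => y j ≤ t) (by omega) hJ1k
      have hty : t ≤ y (J + 1) := le_of_lt (lt_of_not_ge hnot)
      have hFJ1 : F (y (J + 1)) = ((J : ℝ) + 1) / k := by
        rw [hFy (J + 1) (by omega) hJ1k]; push_cast; ring
      have hSJ1 := abs_le.1 (hclose (J + 1) (by omega) hJ1k)
      have hFle1 : F t ≤ F (y (J + 1)) := hFmono hty
      have hSle1 : S t ≤ S (y (J + 1)) := hSmono hty
      have hid : ((J : ℝ) + 1) / k - (J : ℝ) / k = 1 / k := by
        rw [div_sub_div_same]; ring_nf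
      constructor <;> linarith
  · have hty : t ≤ y 1 := le_of_lt (lt_of_not_ge hc1)
    have hF1' : F (y 1) = 1 / (k : ℝ) := by
      rw [hFy 1 le_rfl h1k1]; norm_num
    have hS1' := abs_le.1 (hclose 1 le_rfl h1k1)
    have hFle : F t ≤ F (y 1) := hFmono hty
    have hSle : S t ≤ S (y 1) := hSmono hty
    constructor <;> linarith [hF0 t, hS0 t]

theorem exchangeable_truncation_average_ecdf_glivenko_cantelli
    {Ω : Type*} [MeasurableSpace Ω] (μ : Measure Ω) [IsProbabilityMeasure μ]
    (f : ℝ → ℝ → ℝ) (hf_meas : Measurable (Function.uncurry f))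
    (hf_nn : ∀ x y, 0 ≤ f x y) (hf_symm : ∀ x y, f x y = f y x)
    (hf_int : Integrable (fun p : ℝ × ℝ => f p.1 p.2))
    (hf_one : (∫ p : ℝ × ℝ, f p.1 p.2) = 1)
    (Z : ℕ → Ω → ℝ × ℝ) (hZmeas : ∀ i, Measurable (Z i))
    (hindep : iIndepFun Z μ)
    (hlaw : ∀ i, μ.map (Z i) = (volume : Measure (ℝ × ℝ)).withDensity
      (fun p => ENNReal.ofReal (if p.1 < p.2 then 2 * f p.1 p.2 else 0)))
    (F : ℝ → ℝ) (hF : ∀ t, F t = ∫ p : ℝ × ℝ, (if p.1 ≤ t then f p.1 p.2 else 0)) :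
    ∀ᵐ ω ∂μ, Tendsto (fun n : ℕ =>
        ⨆ t : ℝ, |(1 / (2 * (n : ℝ))) *
            ((∑ i ∈ Finset.range n, if (Z i ω).1 ≤ t then (1 : ℝ) else 0)
              + ∑ i ∈ Finset.range n, if (Z i ω).2 ≤ t then (1 : ℝ) else 0)
          - F t|)
      atTop (nhds 0) := by
  classical
  have hFeq : F = auxG f := funext fun t => hF t
  have hFmono : Monotone F := by rw [hFeq]; exact aux_G_mono f hf_meas hf_nn hf_int
  have hF0 : ∀ t, 0 ≤ F t := by rw [hFeq]; exact aux_G_nonneg f hf_meas hf_nn hf_int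
  have hF1 : ∀ t, F t ≤ 1 := by
    rw [hFeq]; exact aux_G_le_one f hf_meas hf_nn hf_int hf_one
  have hsurj : ∀ c : ℝ, 0 < c → c < 1 → ∃ x, F x = c := by
    rw [hFeq]; exact fun c hc0 hc1 => aux_G_surj f hf_meas hf_nn hf_int hf_one hc0 hc1
  -- choice of grid points
  set x : ℚ → ℝ := fun q =>
    if h : 0 < ((q : ℝ)) ∧ ((q : ℝ)) < 1 then (hsurj q h.1 h.2).choose else 0 with hxdef
  have hx : ∀ q : ℚ, 0 < ((q : ℝ)) → ((q : ℝ)) < 1 → F (x q) = (q : ℝ) := by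
    intro q h0 h1
    rw [hxdef]
    simp only [dif_pos (And.intro h0 h1)]
    exact (hsurj q h0 h1).choose_spec
  -- a.s. convergence at all grid points
  have hae : ∀ᵐ ω ∂μ, ∀ q : ℚ, Tendsto (fun n : ℕ =>
      (∑ i ∈ Finset.range n,
        ((if (Z i ω).1 ≤ x q then (1 : ℝ) else 0) + if (Z i ω).2 ≤ x q then (1 : ℝ) else 0)) / n)
      atTop (nhds (2 * F (x q))) := by
    rw [ae_all_iff]
    intro q
    have h := aux_slln f hf_meas hf_nn hf_int hf_symm μ Z hZmeas hindep hlaw (x q)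
    rw [← hF (x q)] at h
    exact h
  filter_upwards [hae] with ω hω
  -- the empirical process
  set E : ℕ → ℝ → ℝ := fun n t => (1 / (2 * (n : ℝ))) *
      ((∑ i ∈ Finset.range n, if (Z i ω).1 ≤ t then (1 : ℝ) else 0)
        + ∑ i ∈ Finset.range n, if (Z i ω).2 ≤ t then (1 : ℝ) else 0) with hEdef
  show Tendsto (fun n : ℕ => ⨆ t : ℝ, |E n t - F t|) atTop (nhds 0)
  have hEmono : ∀ n, Monotone (E n) := by
    intro n s t hst
    refine mul_le_mul_of_nonneg_left (add_le_add ?_ ?_) (by positivity) <;>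
      refine Finset.sum_le_sum fun i _ => ?_
    · by_cases h : (Z i ω).1 ≤ s
      · simp [h, h.trans hst]
      · by_cases h' : (Z i ω).1 ≤ t <;> simp [h, h']
    · by_cases h : (Z i ω).2 ≤ s
      · simp [h, h.trans hst]
      · by_cases h' : (Z i ω).2 ≤ t <;> simp [h, h']
  have hE0 : ∀ n t, 0 ≤ E n t := by
    intro n t
    refine mul_nonneg (by positivity) (add_nonneg ?_ ?_) <;>
      refine Finset.sum_nonneg fun i _ => ?_
    · by_cases h : (Z i ω).1 ≤ t <;> simp [h]
    · by_cases h : (Z i ω).2 ≤ t <;> simp [h]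
  have hE1 : ∀ n : ℕ, 1 ≤ n → ∀ t, E n t ≤ 1 := by
    intro n hn t
    have hb : ∀ g : ℕ → ℝ, (∀ i, g i ≤ 1) → (∑ i ∈ Finset.range n, g i) ≤ n := by
      intro g hg
      calc (∑ i ∈ Finset.range n, g i) ≤ ∑ _i ∈ Finset.range n, (1 : ℝ) :=
            Finset.sum_le_sum fun i _ => hg i
        _ = n := by simp
    have hbsum : ((∑ i ∈ Finset.range n, if (Z i ω).1 ≤ t then (1 : ℝ) else 0)
        + ∑ i ∈ Finset.range n, if (Z i ω).2 ≤ t then (1 : ℝ) else 0) ≤ 2 * n := by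
      have h1 := hb (fun i => if (Z i ω).1 ≤ t then (1 : ℝ) else 0)
        (fun i => by by_cases h : (Z i ω).1 ≤ t <;> simp [h])
      have h2 := hb (fun i => if (Z i ω).2 ≤ t then (1 : ℝ) else 0)
        (fun i => by by_cases h : (Z i ω).2 ≤ t <;> simp [h])
      linarith
    have hn0 : (0 : ℝ) < 2 * (n : ℝ) := by
      have : (1 : ℝ) ≤ (n : ℝ) := by exact_mod_cast hn
      linarith
    calc E n t ≤ (1 / (2 * (n : ℝ))) * (2 * n) :=
          mul_le_mul_of_nonneg_left hbsum (by positivity)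
      _ = 1 := by field_simp
  have hconv : ∀ q : ℚ, Tendsto (fun n : ℕ => E n (x q)) atTop (nhds (F (x q))) := by
    intro q
    have h := (hω q).const_mul (1 / 2 : ℝ)
    have heq : (1 / 2 : ℝ) * (2 * F (x q)) = F (x q) := by ring
    rw [heq] at h
    refine h.congr fun n => ?_
    simp only [hEdef]
    rw [Finset.sum_add_distrib]
    rw [one_div, one_div, mul_inv, div_eq_mul_inv]
    ring
  -- final argument
  rw [Metric.tendsto_atTop]
  intro ε hε
  obtain ⟨k, hkgt⟩ := exists_nat_gt (max 1 (4 / ε))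
  have hk1 : (1 : ℝ) < k := lt_of_le_of_lt (le_max_left _ _) hkgt
  have hk2 : 2 ≤ k := by exact_mod_cast Nat.one_lt_cast.mp hk1
  have hk0 : (0 : ℝ) < k := by linarith
  have hkε : 1 / (k : ℝ) < ε / 4 := by
    have h4 : 4 / ε < k := lt_of_le_of_lt (le_max_right _ _) hkgt
    rw [div_lt_div_iff₀ hk0 (by norm_num : (0:ℝ) < 4)]
    rw [div_lt_iff₀ hε] at h4
    linarith
  set y : ℕ → ℝ := fun j => x ((j : ℚ) / (k : ℚ)) with hydef
  have hFy : ∀ j, 1 ≤ j → j ≤ k - 1 → F (y j) = (j : ℝ) / k := by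
    intro j hj1 hjk
    have hjk' : j < k := by omega
    have h0 : (0 : ℝ) < (((j : ℚ) / (k : ℚ) : ℚ) : ℝ) := by
      push_cast
      positivity
    have h1 : (((j : ℚ) / (k : ℚ) : ℚ) : ℝ) < 1 := by
      push_cast
      rw [div_lt_one hk0]
      exact_mod_cast hjk'
    simp only [hydef]
    rw [hx _ h0 h1]
    push_cast
    ring
  have hev : ∀ᶠ n : ℕ in atTop,
      (∀ j ∈ Finset.Icc 1 (k - 1), |E n (y j) - F (y j)| ≤ ε / 4) ∧ 1 ≤ n := by
    refine Eventually.and ((eventually_all_finset _).2 fun j _ => ?_) (eventually_ge_atTop 1)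
    have h := Metric.tendsto_atTop.1 (hconv ((j : ℚ) / (k : ℚ))) (ε / 4) (by positivity)
    obtain ⟨N, hN⟩ := h
    refine eventually_atTop.2 ⟨N, fun n hn => ?_⟩
    have := hN n hn
    rw [Real.dist_eq] at this
    exact le_of_lt this
  obtain ⟨N, hN⟩ := eventually_atTop.1 hev
  refine ⟨N, fun n hn => ?_⟩
  obtain ⟨hclose, hn1⟩ := hN n hn
  have hbound : ∀ t, |E n t - F t| ≤ ε / 4 + 1 / k :=
    aux_chain (E n) F (hEmono n) (hE0 n) (hE1 n hn1) hFmono hF0 hF1 k hk2 y hFy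
      (ε / 4) (by positivity)
      (fun j hj1 hj2 => hclose j (Finset.mem_Icc.2 ⟨hj1, hj2⟩))
  have hsup_le : (⨆ t : ℝ, |E n t - F t|) ≤ ε / 4 + 1 / k := ciSup_le hbound
  have hbdd : BddAbove (Set.range fun t : ℝ => |E n t - F t|) := by
    refine ⟨ε / 4 + 1 / k, ?_⟩
    rintro r ⟨t, rfl⟩
    exact hbound t
  have hsup_nonneg : 0 ≤ ⨆ t : ℝ, |E n t - F t| :=
    le_trans (abs_nonneg _) (le_ciSup hbdd 0)
  rw [Real.dist_eq, sub_zero, abs_of_nonneg hsup_nonneg]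
  calc (⨆ t : ℝ, |E n t - F t|) ≤ ε / 4 + 1 / k := hsup_le
    _ < ε / 4 + ε / 4 := by linarith
    _ < ε := by linarith
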